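/- (Sakugawa–Seki, second identity) For s = (s_1,...,s_d) positive integers, w = s_1+...+s_d, l(i) = s_1+...+s_i, variables t_1,...,t_d, and n ≥ 1: ∑_{n ≥ n_1 ≥ ... ≥ n_d ≥ 1} t_1^{n_1-n_2} ··· t_{d-1}^{n_{d-1}-n_d} t_d^{n_d} / (n_1^{s_1} ··· n_d^{s_d}) = ∑_{n ≥ n_1 ≥ ... ≥ n_w ≥ 1} (-1)^{n_1} C(n,n_1) (1-t_1)^{n_{l(1)}-n_{l(1)+1}} ··· (1-t_{d-1})^{n_{l(d-1)}-n_{l(d-1)+1}} ((1-t_d)^{n_{l(d)}} - 1) / (n_1 ··· n_w). -/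

import Mathlib

/-- Weakly decreasing chains `hi ≥ f 0 ≥ f 1 ≥ ⋯ ≥ f (d-1) ≥ lo`. -/
def chainsIcc (d lo hi : ℕ) : Finset (Fin d → ℕ) :=
  (Fintype.piFinset fun _ : Fin d => Finset.Icc lo hi).filter
    fun f => ∀ i j : Fin d, i ≤ j → f j ≤ f i

/-- `idx f j` is the paper's `n_j` (1-indexed entry of the chain `f`). -/
def idx {w : ℕ} (f : Fin w → ℕ) (j : ℕ) : ℕ :=
  if h : j - 1 < w then f ⟨j - 1, h⟩ else 0

def lsum (s : ℕ → ℕ) (i : ℕ) : ℕ := ∑ j ∈ Finset.range i, s j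

open Finset

section Aux

variable {A : Type*} [CommRing A] [Algebra ℚ A]

/-- Generic nested sum with base `β`. -/
noncomputable def Egen (β : A → ℕ → A) : List A → ℕ → A
  | [], _ => 0
  | [u], n => β u n
  | u :: v :: us, n =>
      ∑ m ∈ Finset.Icc 1 n, (m : ℚ)⁻¹ • (u ^ (n - m) * Egen β (v :: us) m)

@[simp] lemma Egen_singleton (β : A → ℕ → A) (u : A) (n : ℕ) :
    Egen β [u] n = β u n := rfl

lemma Egen_cons (β : A → ℕ → A) (u v : A) (us : List A) (n : ℕ) :
    Egen β (u :: v :: us) n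
      = ∑ m ∈ Finset.Icc 1 n, (m : ℚ)⁻¹ • (u ^ (n - m) * Egen β (v :: us) m) := rfl

lemma Egen_cons' (β : A → ℕ → A) (u : A) (us : List A) (hus : us ≠ []) (n : ℕ) :
    Egen β (u :: us) n
      = ∑ m ∈ Finset.Icc 1 n, (m : ℚ)⁻¹ • (u ^ (n - m) * Egen β us m) := by
  obtain ⟨v, us', rfl⟩ := List.exists_cons_of_ne_nil hus
  rfl

lemma Egen_cons_zero (β : A → ℕ → A) (u : A) (us : List A) (hus : us ≠ []) :
    Egen β (u :: us) 0 = 0 := by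
  rw [Egen_cons' β u us hus]
  simp

/-- step recursion in `n`. -/
lemma Egen_cons_succ (β : A → ℕ → A) (u : A) (us : List A) (hus : us ≠ []) (n : ℕ) :
    Egen β (u :: us) (n + 1)
      = u * Egen β (u :: us) n + ((n + 1 : ℕ) : ℚ)⁻¹ • Egen β us (n + 1) := by
  rw [Egen_cons' β u us hus, Egen_cons' β u us hus,
    Finset.sum_Icc_succ_top (Nat.le_add_left 1 n)]
  rw [Finset.mul_sum]
  congr 1
  · apply Finset.sum_congr rfl
    intro m hm
    rw [Finset.mem_Icc] at hm
    rw [mul_smul_comm]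
    congr 1
    rw [← mul_assoc, ← pow_succ']
    congr 2
    omega
  · simp

/-- head `0` collapses. -/
lemma Egen_zero_cons (β : A → ℕ → A) (us : List A) (hus : us ≠ []) (n : ℕ) (hn : 1 ≤ n) :
    Egen β ((0 : A) :: us) n = (n : ℚ)⁻¹ • Egen β us n := by
  rw [Egen_cons' β 0 us hus]
  rw [Finset.sum_eq_single_of_mem n (by simp [Finset.mem_Icc, hn])]
  · simp
  · intro m hm hmn
    rw [Finset.mem_Icc] at hm
    rw [zero_pow (by omega), zero_mul, smul_zero]

lemma Egen_replicate_zero (β : A → ℕ → A) (a : ℕ) (us : List A) (hus : us ≠ [])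
    (n : ℕ) (hn : 1 ≤ n) :
    Egen β (List.replicate a (0 : A) ++ us) n = ((n : ℚ) ^ a)⁻¹ • Egen β us n := by
  induction a with
  | zero => simp
  | succ a ih =>
      rw [List.replicate_succ, List.cons_append, Egen_zero_cons β _ (by simp [hus]) n hn,
        ih, smul_smul, pow_succ, mul_inv, mul_comm]

/-- `E` with base `u^k`. -/
noncomputable def EE : List A → ℕ → A := Egen fun u k => u ^ k
/-- `E'` with base `u^k - 1`. -/
noncomputable def EP : List A → ℕ → A := Egen fun u k => u ^ k - 1

lemma EP_zero (vs : List A) (hvs : vs ≠ []) : EP vs 0 = 0 := by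
  obtain ⟨v, vs', rfl⟩ := List.exists_cons_of_ne_nil hvs
  cases vs' with
  | nil => simp [EP]
  | cons w ws => exact Egen_cons_zero _ _ _ (by simp)

lemma alt_choose_q (n : ℕ) :
    ∑ j ∈ Finset.range (n + 1), ((-1 : ℚ) ^ j * (n.choose j : ℚ))
      = if n = 0 then 1 else 0 := by
  have h := Int.alternating_sum_range_choose (n := n)
  have h2 : ∑ i ∈ Finset.range (n + 1), ((-1 : ℚ) ^ i * (n.choose i : ℚ))
      = (((if n = 0 then 1 else 0 : ℤ)) : ℚ) := by exact_mod_cast h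
  rw [h2]
  split <;> simp

lemma choose_div_q (n j : ℕ) :
    (n.choose j : ℚ) * ((j + 1 : ℕ) : ℚ)⁻¹
      = ((n + 1).choose (j + 1) : ℚ) * ((n + 1 : ℕ) : ℚ)⁻¹ := by
  have h := Nat.add_one_mul_choose_eq n j
  have h' : ((n + 1) * n.choose j : ℚ) = ((n + 1).choose (j + 1) * (j + 1) : ℚ) := by
    exact_mod_cast congrArg (Nat.cast : ℕ → ℚ) h
  have hj : ((j + 1 : ℕ) : ℚ) ≠ 0 := by positivity
  have hn : ((n + 1 : ℕ) : ℚ) ≠ 0 := by positivity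
  field_simp
  push_cast at h' ⊢
  linarith [h']

lemma alt_sum_step (g : ℕ → A) (hg0 : g 0 = 0) (n : ℕ) :
    ∑ m ∈ Finset.range (n + 2), ((-1 : ℚ) ^ m * ((n + 1).choose m : ℚ)) • g m
      = ∑ m ∈ Finset.range (n + 1), ((-1 : ℚ) ^ m * (n.choose m : ℚ)) • g m
        - ∑ j ∈ Finset.range (n + 1), ((-1 : ℚ) ^ j * (n.choose j : ℚ)) • g (j + 1) := by
  rw [Finset.sum_range_succ' (fun m => ((-1 : ℚ) ^ m * ((n + 1).choose m : ℚ)) • g m) (n + 1)]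
  have hsplit : ∀ j ∈ Finset.range (n + 1),
      ((-1 : ℚ) ^ (j + 1) * ((n + 1).choose (j + 1) : ℚ)) • g (j + 1)
        = ((-1 : ℚ) ^ (j + 1) * (n.choose (j + 1) : ℚ)) • g (j + 1)
          - ((-1 : ℚ) ^ j * (n.choose j : ℚ)) • g (j + 1) := by
    intro j _
    rw [Nat.choose_succ_succ']
    push_cast
    rw [pow_succ]
    module
  rw [Finset.sum_congr rfl hsplit, Finset.sum_sub_distrib]
  have h2 : ∑ j ∈ Finset.range (n + 1), ((-1 : ℚ) ^ (j + 1) * (n.choose (j + 1) : ℚ)) • g (j + 1)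
      = ∑ m ∈ Finset.range (n + 1), ((-1 : ℚ) ^ m * (n.choose m : ℚ)) • g m := by
    have h3 := Finset.sum_range_succ'
      (fun m => ((-1 : ℚ) ^ m * (n.choose m : ℚ)) • g m) (n + 1)
    rw [Finset.sum_range_succ] at h3
    simp only [Nat.choose_succ_self, Nat.cast_zero, mul_zero, zero_smul, add_zero,
      hg0, smul_zero] at h3
    exact h3.symm
  rw [h2, hg0]
  simp

lemma key : ∀ (us : List A), us ≠ [] → ∀ n : ℕ,
    ∑ m ∈ Finset.range (n + 1),
        ((-1 : ℚ) ^ m * (n.choose m : ℚ)) • EP (us.map (fun x => 1 - x)) m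
      = if n = 0 then 0 else EE us n := by
  intro us
  induction us with
  | nil => intro h; exact absurd rfl h
  | cons u us' ih =>
    intro _ n
    have hmap : (u :: us').map (fun x => (1 : A) - x)
        = (1 - u) :: us'.map (fun x => 1 - x) := rfl
    induction n with
    | zero =>
        rw [if_pos rfl, Finset.sum_range_one,
          EP_zero ((u :: us').map (fun x => (1 : A) - x)) (by simp), smul_zero]
    | succ n ihn =>
        have hg0 : EP ((u :: us').map (fun x => (1 : A) - x)) 0 = 0 :=
          EP_zero _ (by simp)
        rw [show n + 1 + 1 = n + 2 from rfl,
          alt_sum_step (fun m => EP ((u :: us').map (fun x => (1 : A) - x)) m) hg0 n,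
          ihn]
        rw [if_neg (Nat.succ_ne_zero n)]
        cases us' with
        | nil =>
            have hrec : ∀ j : ℕ, EP ([u].map (fun x => (1 : A) - x)) (j + 1)
                = (1 - u) * EP ([u].map (fun x => (1 : A) - x)) j - u := by
              intro j
              show (1 - u) ^ (j + 1) - 1 = (1 - u) * ((1 - u) ^ j - 1) - u
              ring
            have hsplit : ∀ j ∈ Finset.range (n + 1),
                ((-1 : ℚ) ^ j * (n.choose j : ℚ)) • EP ([u].map (fun x => (1 : A) - x)) (j + 1)
                  = (1 - u) * (((-1 : ℚ) ^ j * (n.choose j : ℚ))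
                        • EP ([u].map (fun x => (1 : A) - x)) j)
                    - ((-1 : ℚ) ^ j * (n.choose j : ℚ)) • u := by
              intro j _
              rw [hrec, smul_sub, mul_smul_comm]
            rw [Finset.sum_congr rfl hsplit, Finset.sum_sub_distrib, ← Finset.mul_sum,
              ← Finset.sum_smul, ihn, alt_choose_q]
            rcases Nat.eq_zero_or_pos n with hn | hn
            · subst hn
              show (0 : A) - ((1 - u) * 0 - (1 : ℚ) • u) = EE [u] 1
              show (0 : A) - ((1 - u) * 0 - (1 : ℚ) • u) = u ^ 1
              rw [one_smul]; ring
            · rw [if_neg (by omega), if_neg (by omega)]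
              show EE [u] n - ((1 - u) * EE [u] n - (0 : ℚ) • u) = EE [u] (n + 1)
              show (u : A) ^ n - ((1 - u) * u ^ n - (0 : ℚ) • u) = u ^ (n + 1)
              rw [zero_smul]; ring
        | cons w ws =>
            have hvs : (w :: ws).map (fun x => (1 : A) - x) ≠ [] := by simp
            have hrec : ∀ j : ℕ,
                EP ((u :: w :: ws).map (fun x => (1 : A) - x)) (j + 1)
                  = (1 - u) * EP ((u :: w :: ws).map (fun x => (1 : A) - x)) j
                    + ((j + 1 : ℕ) : ℚ)⁻¹ • EP ((w :: ws).map (fun x => (1 : A) - x)) (j + 1) := by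
              intro j
              exact Egen_cons_succ _ _ _ hvs j
            have hsplit : ∀ j ∈ Finset.range (n + 1),
                ((-1 : ℚ) ^ j * (n.choose j : ℚ))
                    • EP ((u :: w :: ws).map (fun x => (1 : A) - x)) (j + 1)
                  = (1 - u) * (((-1 : ℚ) ^ j * (n.choose j : ℚ))
                        • EP ((u :: w :: ws).map (fun x => (1 : A) - x)) j)
                    + (((n + 1 : ℕ) : ℚ)⁻¹ * ((-1 : ℚ) ^ j * ((n + 1).choose (j + 1) : ℚ)))
                        • EP ((w :: ws).map (fun x => (1 : A) - x)) (j + 1) := by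
              intro j _
              rw [hrec, smul_add, mul_smul_comm, smul_smul]
              congr 2
              rw [mul_assoc, choose_div_q]
              ring
            rw [Finset.sum_congr rfl hsplit, Finset.sum_add_distrib, ← Finset.mul_sum, ihn]
            have hK : ∑ j ∈ Finset.range (n + 1),
                (((n + 1 : ℕ) : ℚ)⁻¹ * ((-1 : ℚ) ^ j * ((n + 1).choose (j + 1) : ℚ)))
                    • EP ((w :: ws).map (fun x => (1 : A) - x)) (j + 1)
                = -(((n + 1 : ℕ) : ℚ)⁻¹ • EE (w :: ws) (n + 1)) := by
              have hKsum := Finset.sum_range_succ'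
                (fun m => ((-1 : ℚ) ^ m * ((n + 1).choose m : ℚ))
                    • EP ((w :: ws).map (fun x => (1 : A) - x)) m) (n + 1)
              rw [ih (by simp) (n + 1), if_neg (Nat.succ_ne_zero n)] at hKsum
              simp only [EP_zero ((w :: ws).map (fun x => (1 : A) - x)) hvs, smul_zero,
                add_zero] at hKsum
              have : ∑ j ∈ Finset.range (n + 1),
                  (((n + 1 : ℕ) : ℚ)⁻¹ * ((-1 : ℚ) ^ j * ((n + 1).choose (j + 1) : ℚ)))
                      • EP ((w :: ws).map (fun x => (1 : A) - x)) (j + 1)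
                  = ((n + 1 : ℕ) : ℚ)⁻¹ • ∑ j ∈ Finset.range (n + 1),
                      (-(((-1 : ℚ) ^ (j + 1) * ((n + 1).choose (j + 1) : ℚ))))
                        • EP ((w :: ws).map (fun x => (1 : A) - x)) (j + 1) := by
                rw [Finset.smul_sum]
                apply Finset.sum_congr rfl
                intro j _
                rw [smul_smul]
                congr 1
                rw [pow_succ]
                ring
              rw [this]
              have h4 : ∑ j ∈ Finset.range (n + 1),
                  (-(((-1 : ℚ) ^ (j + 1) * ((n + 1).choose (j + 1) : ℚ))))
                      • EP ((w :: ws).map (fun x => (1 : A) - x)) (j + 1)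
                  = -∑ j ∈ Finset.range (n + 1),
                      (((-1 : ℚ) ^ (j + 1) * ((n + 1).choose (j + 1) : ℚ)))
                        • EP ((w :: ws).map (fun x => (1 : A) - x)) (j + 1) := by
                rw [← Finset.sum_neg_distrib]
                exact Finset.sum_congr rfl fun j _ => by rw [neg_smul]
              rw [h4, ← hKsum, smul_neg]
            rw [hK]
            have h5 : EE (u :: w :: ws) (n + 1)
                = u * EE (u :: w :: ws) n + ((n + 1 : ℕ) : ℚ)⁻¹ • EE (w :: ws) (n + 1) :=
              Egen_cons_succ _ _ _ (by simp) n
            rcases Nat.eq_zero_or_pos n with hn | hn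
            · subst hn
              rw [if_pos rfl, h5]
              have h6 : EE (u :: w :: ws) 0 = 0 := Egen_cons_zero _ _ _ (by simp)
              rw [h6]
              ring
            · rw [if_neg (by omega), h5]
              ring

omit [Algebra ℚ A] in
lemma Icc_sum_eq_range_sum (h : ℕ → A) (n : ℕ) (h0 : h 0 = 0) :
    ∑ m ∈ Finset.Icc 1 (n + 1), h m = ∑ m ∈ Finset.range (n + 2), h m := by
  rw [← Finset.Ico_add_one_right_eq_Icc, Finset.sum_Ico_eq_sum_range,
    show n + 1 + 1 - 1 = n + 1 from rfl, show n + 2 = n + 1 + 1 from rfl,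
    Finset.sum_range_succ' h (n + 1), h0, add_zero]
  exact Finset.sum_congr rfl fun i _ => by rw [Nat.add_comm]

lemma star (us : List A) (hus : us ≠ []) (n : ℕ) :
    ∑ m ∈ Finset.Icc 1 n, (m : ℚ)⁻¹ • EE us m
      = ∑ m ∈ Finset.Icc 1 n,
          ((-1 : ℚ) ^ m * (n.choose m : ℚ) * (m : ℚ)⁻¹)
            • EP (us.map (fun x => 1 - x)) m := by
  induction n with
  | zero =>
      have h0 : Finset.Icc 1 0 = (∅ : Finset ℕ) := Finset.Icc_eq_empty_of_lt (by norm_num)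
      rw [h0, Finset.sum_empty, Finset.sum_empty]
  | succ n ihn =>
      rw [Finset.sum_Icc_succ_top (Nat.le_add_left 1 n),
        Finset.sum_Icc_succ_top (Nat.le_add_left 1 n), ihn]
      have hsplit : ∀ m ∈ Finset.Icc 1 n,
          ((-1 : ℚ) ^ m * ((n + 1).choose m : ℚ) * (m : ℚ)⁻¹)
              • EP (us.map (fun x => 1 - x)) m
            = ((-1 : ℚ) ^ m * (n.choose m : ℚ) * (m : ℚ)⁻¹)
                • EP (us.map (fun x => 1 - x)) m
              + ((-1 : ℚ) ^ m * (n.choose (m - 1) : ℚ) * (m : ℚ)⁻¹)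
                • EP (us.map (fun x => 1 - x)) m := by
        intro m hm
        rw [Finset.mem_Icc] at hm
        obtain ⟨j, rfl⟩ : ∃ j, m = j + 1 := ⟨m - 1, by omega⟩
        rw [← add_smul]
        congr 1
        rw [Nat.choose_succ_succ']
        push_cast
        try simp only [Nat.add_sub_cancel]
        ring
      rw [Finset.sum_congr rfl hsplit, Finset.sum_add_distrib, add_assoc]
      congr 1
      have htop : ((-1 : ℚ) ^ (n + 1) * ((n + 1).choose (n + 1) : ℚ) * ((n + 1 : ℕ) : ℚ)⁻¹)
            • EP (us.map (fun x => 1 - x)) (n + 1)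
          = ((-1 : ℚ) ^ (n + 1) * (n.choose ((n + 1) - 1) : ℚ) * ((n + 1 : ℕ) : ℚ)⁻¹)
            • EP (us.map (fun x => 1 - x)) (n + 1) := by
        rw [Nat.choose_self, Nat.add_sub_cancel, Nat.choose_self]
      rw [htop, ← Finset.sum_Icc_succ_top (Nat.le_add_left 1 n)
        (fun m => ((-1 : ℚ) ^ m * (n.choose (m - 1) : ℚ) * (m : ℚ)⁻¹)
            • EP (us.map (fun x => 1 - x)) m)]
      have hconv : ∀ m ∈ Finset.Icc 1 (n + 1),
          ((-1 : ℚ) ^ m * (n.choose (m - 1) : ℚ) * (m : ℚ)⁻¹)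
              • EP (us.map (fun x => 1 - x)) m
            = ((n + 1 : ℕ) : ℚ)⁻¹ • (((-1 : ℚ) ^ m * ((n + 1).choose m : ℚ))
                • EP (us.map (fun x => 1 - x)) m) := by
        intro m hm
        rw [Finset.mem_Icc] at hm
        obtain ⟨j, rfl⟩ : ∃ j, m = j + 1 := ⟨m - 1, by omega⟩
        rw [smul_smul]
        congr 1
        simp only [Nat.add_sub_cancel]
        have := choose_div_q n j
        push_cast at this ⊢
        rw [mul_assoc, this]
        ring
      rw [Finset.sum_congr rfl hconv, ← Finset.smul_sum]
      rw [Icc_sum_eq_range_sum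
        (fun m => ((-1 : ℚ) ^ m * (((n + 1).choose m : ℕ) : ℚ))
          • EP (us.map (fun x => 1 - x)) m) n
        (by simp [EP_zero (us.map (fun x => 1 - x)) (by simpa using hus)])]
      rw [key us hus (n + 1), if_neg (Nat.succ_ne_zero n)]

end Aux

section Chains

lemma mem_chainsIcc {d lo hi : ℕ} {f : Fin d → ℕ} :
    f ∈ chainsIcc d lo hi
      ↔ (∀ i, lo ≤ f i ∧ f i ≤ hi) ∧ ∀ i j : Fin d, i ≤ j → f j ≤ f i := by
  simp [chainsIcc, Fintype.mem_piFinset, Finset.mem_Icc]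

lemma idx_one {d : ℕ} (f : Fin (d + 1) → ℕ) : idx f 1 = f 0 := by
  simp [idx]

lemma idx_lt {w : ℕ} (f : Fin w → ℕ) (j : ℕ) (h : j < w) :
    idx f (j + 1) = f ⟨j, h⟩ := by
  simp only [idx, Nat.add_sub_cancel]
  exact dif_pos h

lemma idx_cons_one {d : ℕ} (k : ℕ) (g : Fin d → ℕ) :
    idx (Fin.cons k g) 1 = k := by
  rw [idx_one]
  exact Fin.cons_zero k (α := fun _ => ℕ) g

lemma idx_cons_succ {d : ℕ} (k : ℕ) (g : Fin d → ℕ) (j : ℕ) (h : j < d) :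
    idx (Fin.cons k g) (j + 2) = idx g (j + 1) := by
  rw [idx_lt (Fin.cons k g) (j + 1) (by omega), idx_lt g j h]
  exact Fin.cons_succ k (α := fun _ => ℕ) g ⟨j, h⟩

lemma sum_chainsIcc_zero {M : Type*} [AddCommMonoid M] (lo hi : ℕ)
    (H : (Fin 0 → ℕ) → M) :
    ∑ f ∈ chainsIcc 0 lo hi, H f = H (fun i => i.elim0) := by
  have h : chainsIcc 0 lo hi = {fun i => i.elim0} := by
    apply Finset.eq_singleton_iff_unique_mem.mpr
    constructor
    · rw [mem_chainsIcc]
      exact ⟨fun i => i.elim0, fun i => i.elim0⟩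
    · intro f _
      funext i
      exact i.elim0
  rw [h, Finset.sum_singleton]

lemma sum_chainsIcc_succ {M : Type*} [AddCommMonoid M] (d lo n : ℕ)
    (H : (Fin (d + 1) → ℕ) → M) :
    ∑ f ∈ chainsIcc (d + 1) lo n, H f
      = ∑ k ∈ Finset.Icc lo n, ∑ g ∈ chainsIcc d lo k, H (Fin.cons k g) := by
  rw [← Finset.sum_sigma (Finset.Icc lo n) (fun k => chainsIcc d lo k)
    (fun p => H (Fin.cons p.1 p.2))]
  apply Finset.sum_nbij' (i := fun f => (⟨f 0, Fin.tail f⟩ : Σ _ : ℕ, Fin d → ℕ))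
    (j := fun p => Fin.cons p.1 p.2)
  · intro f hf
    rw [mem_chainsIcc] at hf
    rw [Finset.mem_sigma, Finset.mem_Icc, mem_chainsIcc]
    refine ⟨⟨(hf.1 0).1, (hf.1 0).2⟩, fun i => ⟨(hf.1 i.succ).1, ?_⟩,
      fun i j hij => hf.2 i.succ j.succ (by simpa using hij)⟩
    exact hf.2 0 i.succ (Fin.zero_le _)
  · intro p hp
    rw [Finset.mem_sigma, Finset.mem_Icc, mem_chainsIcc] at hp
    rw [mem_chainsIcc]
    constructor
    · intro i
      refine Fin.cases ?_ ?_ i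
      · simpa using hp.1
      · intro i'
        simp only [Fin.cons_succ]
        exact ⟨(hp.2.1 i').1, le_trans (hp.2.1 i').2 hp.1.2⟩
    · intro i j hij
      rcases Fin.eq_zero_or_eq_succ j with hj | ⟨j', rfl⟩
      · subst hj
        have : i = 0 := le_antisymm hij (Fin.zero_le i)
        subst this
        exact le_refl _
      · rcases Fin.eq_zero_or_eq_succ i with hi | ⟨i', rfl⟩
        · subst hi
          simp only [Fin.cons_succ, Fin.cons_zero]
          exact (hp.2.1 j').2
        · simp only [Fin.cons_succ]
          exact hp.2.2 i' j' (by simpa using hij)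
  · intro f _
    exact Fin.cons_self_tail f
  · intro p _
    simp only [Fin.cons_zero, Fin.tail_cons]
  · intro f _
    rw [Fin.cons_self_tail f]

end Chains

section Bridge

variable {A : Type*} [CommRing A] [Algebra ℚ A]

noncomputable def padList : ℕ → (ℕ → ℕ) → (ℕ → A) → List A
  | 0, _, _ => []
  | d + 1, s, t =>
      (List.replicate (s 0 - 1) 0 ++ [t 0])
        ++ padList d (fun i => s (i + 1)) (fun i => t (i + 1))

lemma padList_ne_nil (d : ℕ) (s : ℕ → ℕ) (t : ℕ → A) :
    padList (d + 1) s t ≠ [] := by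
  simp [padList]

lemma padList_succ_eq (d : ℕ) (s : ℕ → ℕ) (t : ℕ → A) :
    padList (d + 1) s t
      = List.replicate (s 0 - 1) (0 : A)
          ++ (t 0 :: padList d (fun i => s (i + 1)) (fun i => t (i + 1))) := by
  show (List.replicate (s 0 - 1) (0 : A) ++ [t 0]) ++ _ = _
  rw [List.append_assoc]
  rfl

lemma bridge (β : A → ℕ → A) : ∀ (d : ℕ) (S : ℕ → ℕ) (T : ℕ → A) (c : ℕ → ℚ)
    (φ : ℕ → A) (n : ℕ), (∀ i, i < d + 1 → 1 ≤ S i) →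
    ∑ f ∈ chainsIcc (d + 1) 1 n,
        (c (idx f 1) * (∏ j ∈ Finset.range (d + 1), ((idx f (j + 1) : ℚ)) ^ S j)⁻¹)
          • (φ (idx f 1) *
            ((∏ j ∈ Finset.range d, T j ^ (idx f (j + 1) - idx f (j + 2))) *
              β (T d) (idx f (d + 1))))
      = ∑ k ∈ Finset.Icc 1 n, (c k * (k : ℚ)⁻¹)
          • (φ k * Egen β (padList (d + 1) S T) k) := by
  intro d
  induction d with
  | zero =>
      intro S T c φ n hS
      rw [sum_chainsIcc_succ 0 1 n]
      apply Finset.sum_congr rfl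
      intro k hk
      rw [Finset.mem_Icc] at hk
      rw [sum_chainsIcc_zero]
      rw [idx_cons_one k _]
      rw [padList_succ_eq, show padList 0 (fun i => S (i + 1)) (fun i => T (i + 1)) = ([] : List A) from rfl,
        Egen_replicate_zero β _ [T 0] (by simp) k hk.1]
      rw [Finset.prod_range_one, Finset.prod_range_zero, idx_cons_one k _, Egen_singleton]
      rw [mul_smul_comm, smul_smul, one_mul]
      congr 1
      obtain ⟨e, he⟩ : ∃ e, S 0 = e + 1 := ⟨S 0 - 1, by have := hS 0 (by omega); omega⟩
      rw [he]
      simp only [Nat.add_sub_cancel]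
      rw [pow_succ, mul_inv]
      ring
  | succ d ihd =>
      intro S T c φ n hS
      rw [sum_chainsIcc_succ (d + 1) 1 n]
      apply Finset.sum_congr rfl
      intro k hk
      rw [Finset.mem_Icc] at hk
      have hper : ∀ g ∈ chainsIcc (d + 1) 1 k,
          (c (idx (Fin.cons k g) 1)
              * (∏ j ∈ Finset.range (d + 1 + 1), ((idx (Fin.cons k g) (j + 1) : ℚ)) ^ S j)⁻¹)
            • (φ (idx (Fin.cons k g) 1) *
              ((∏ j ∈ Finset.range (d + 1),
                  T j ^ (idx (Fin.cons k g) (j + 1) - idx (Fin.cons k g) (j + 2))) *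
                β (T (d + 1)) (idx (Fin.cons k g) (d + 1 + 1))))
          = (c k * (((k : ℚ)) ^ S 0)⁻¹)
            • (φ k *
              (((1 : ℚ) * (∏ j ∈ Finset.range (d + 1), ((idx g (j + 1) : ℚ)) ^ S (j + 1))⁻¹)
                • ((fun m => T 0 ^ (k - m)) (idx g 1) *
                  ((∏ j ∈ Finset.range d,
                      T (j + 1) ^ (idx g (j + 1) - idx g (j + 2))) *
                    β (T (d + 1)) (idx g (d + 1)))))) := by
        intro g hg
        rw [idx_cons_one k g]
        rw [Finset.prod_range_succ'
          (fun j => ((idx (Fin.cons k g) (j + 1) : ℚ)) ^ S j) (d + 1)]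
        rw [Finset.prod_range_succ'
          (fun j => T j ^ (idx (Fin.cons k g) (j + 1) - idx (Fin.cons k g) (j + 2))) d]
        rw [idx_cons_one k g]
        have hprod1 : ∏ j ∈ Finset.range (d + 1),
            ((idx (Fin.cons k g) (j + 1 + 1) : ℚ)) ^ S (j + 1)
            = ∏ j ∈ Finset.range (d + 1), ((idx g (j + 1) : ℚ)) ^ S (j + 1) := by
          apply Finset.prod_congr rfl
          intro j hj
          rw [Finset.mem_range] at hj
          rw [idx_cons_succ k g j (by omega)]
        have hprod2 : ∏ j ∈ Finset.range d,
            T (j + 1) ^ (idx (Fin.cons k g) (j + 1 + 1) - idx (Fin.cons k g) (j + 1 + 2))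
            = ∏ j ∈ Finset.range d, T (j + 1) ^ (idx g (j + 1) - idx g (j + 2)) := by
          apply Finset.prod_congr rfl
          intro j hj
          rw [Finset.mem_range] at hj
          rw [idx_cons_succ k g j (by omega),
            show j + 1 + 2 = (j + 1) + 2 from rfl, idx_cons_succ k g (j + 1) (by omega)]
        have hlast : idx (Fin.cons k g) (d + 1 + 1) = idx g (d + 1) :=
          idx_cons_succ k g d (by omega)
        have hfirst : idx (Fin.cons k g) (0 + 1 + 1) = idx g (0 + 1) :=
          idx_cons_succ k g 0 (by omega)
        rw [hprod1, hprod2, hlast, hfirst]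
        rw [mul_smul_comm, smul_smul]
        congr 1
        · rw [mul_inv]
          ring
        · ring
      rw [Finset.sum_congr rfl hper]
      rw [← Finset.smul_sum, ← Finset.mul_sum]
      rw [ihd (fun i => S (i + 1)) (fun i => T (i + 1)) (fun _ => 1)
        (fun m => T 0 ^ (k - m)) k (fun i hi => hS (i + 1) (by omega))]
      have hcons : ∑ m ∈ Finset.Icc 1 k, ((1 : ℚ) * (m : ℚ)⁻¹)
            • ((fun m => T 0 ^ (k - m)) m
              * Egen β (padList (d + 1) (fun i => S (i + 1)) (fun i => T (i + 1))) m)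
          = Egen β (T 0 :: padList (d + 1) (fun i => S (i + 1)) (fun i => T (i + 1))) k := by
        rw [Egen_cons' β _ _ (padList_ne_nil d _ _) k]
        apply Finset.sum_congr rfl
        intro m _
        rw [one_mul]
      rw [hcons]
      rw [padList_succ_eq (d + 1) S T,
        Egen_replicate_zero β _ _ (by simp) k hk.1]
      rw [mul_smul_comm, smul_smul]
      congr 1
      obtain ⟨e, he⟩ : ∃ e, S 0 = e + 1 := ⟨S 0 - 1, by have := hS 0 (by omega); omega⟩
      rw [he]
      simp only [Nat.add_sub_cancel]
      rw [pow_succ, mul_inv]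
      ring

end Bridge

section Pad

variable {A : Type*} [CommRing A] [Algebra ℚ A]

lemma lsum_succ' (s : ℕ → ℕ) (d : ℕ) :
    lsum s (d + 1) = s 0 + lsum (fun i => s (i + 1)) d := by
  simp only [lsum]
  rw [Finset.sum_range_succ' s d, add_comm]

lemma lsum_ge (s : ℕ → ℕ) (d : ℕ) (hs : ∀ i < d, 1 ≤ s i) : d ≤ lsum s d := by
  induction d with
  | zero => simp [lsum]
  | succ d ih =>
      have : lsum s (d + 1) = lsum s d + s d := Finset.sum_range_succ s d
      have h1 := ih (fun i hi => hs i (by omega))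
      have h2 := hs d (by omega)
      omega

omit [Algebra ℚ A] in
lemma padList_length (t : ℕ → A) : ∀ (d : ℕ) (s : ℕ → ℕ), (∀ i < d, 1 ≤ s i) →
    (padList d s t).length = lsum s d := by
  intro d
  induction d generalizing t with
  | zero => intro s hs; simp [padList, lsum]
  | succ d ih =>
      intro s hs
      show ((List.replicate (s 0 - 1) (0 : A) ++ [t 0])
          ++ padList d (fun i => s (i + 1)) (fun i => t (i + 1))).length = _
      rw [List.length_append, List.length_append, List.length_replicate,
        ih (fun i => t (i + 1)) (fun i => s (i + 1)) (fun i hi => hs (i + 1) (by omega)),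
        lsum_succ']
      have := hs 0 (by omega)
      simp
      omega

omit [Algebra ℚ A] in
lemma padList_getD_zero (t : ℕ → A) (r : ℕ) (j : ℕ) :
    (List.replicate r (0 : A)).getD j 0 = 0 := by
  rcases Nat.lt_or_ge j r with h | h
  · rw [List.getD_eq_getElem _ _ (by simpa using h)]
    simp
  · exact List.getD_eq_default _ _ (by simpa using h)

omit [Algebra ℚ A] in
lemma padList_getD_last (t : ℕ → A) : ∀ (d : ℕ) (s : ℕ → ℕ), (∀ i < d + 1, 1 ≤ s i) →
    (padList (d + 1) s t).getD (lsum s (d + 1) - 1) 0 = t d := by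
  intro d
  induction d generalizing t with
  | zero =>
      intro s hs
      have hs0 := hs 0 (by omega)
      have hl1 : lsum s 1 = s 0 := by simp [lsum]
      have hP : padList 1 s t
          = (List.replicate (s 0 - 1) (0 : A) ++ [t 0]) ++ [] := rfl
      rw [hP, List.append_nil, hl1,
        List.getD_append_right _ _ _ _ (by simp),
        List.length_replicate, Nat.sub_self, List.getD_cons_zero]
  | succ d ih =>
      intro s hs
      have hs0 := hs 0 (by omega)
      have hs' : ∀ i < d + 1, 1 ≤ s (i + 1) := fun i hi => hs (i + 1) (by omega)
      have hge : d + 1 ≤ lsum (fun i => s (i + 1)) (d + 1) := lsum_ge _ _ hs'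
      have hL : lsum s (d + 1 + 1) = s 0 + lsum (fun i => s (i + 1)) (d + 1) :=
        lsum_succ' s (d + 1)
      have hP : padList (d + 1 + 1) s t
          = (List.replicate (s 0 - 1) (0 : A) ++ [t 0])
            ++ padList (d + 1) (fun i => s (i + 1)) (fun i => t (i + 1)) := rfl
      have hblock : (List.replicate (s 0 - 1) (0 : A) ++ [t 0]).length = s 0 := by
        simp; omega
      rw [hP, List.getD_append_right _ _ _ _ (by rw [hblock]; omega)]
      rw [show lsum s (d + 1 + 1) - 1 - (List.replicate (s 0 - 1) (0 : A) ++ [t 0]).length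
          = lsum (fun i => s (i + 1)) (d + 1) - 1 by rw [hblock]; omega]
      exact ih (fun i => t (i + 1)) (fun i => s (i + 1)) hs'

omit [Algebra ℚ A] in
lemma prod_padList (t : ℕ → A) : ∀ (d : ℕ) (s : ℕ → ℕ), (∀ i < d + 1, 1 ≤ s i) →
    ∀ (e : ℕ → ℕ),
    ∏ j ∈ Finset.range (lsum s (d + 1) - 1),
        (1 - (padList (d + 1) s t).getD j 0) ^ (e j)
      = ∏ r ∈ Finset.range d, (1 - t r) ^ (e (lsum s (r + 1) - 1)) := by
  intro d
  induction d generalizing t with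
  | zero =>
      intro s hs e
      rw [Finset.prod_range_zero]
      apply Finset.prod_eq_one
      intro j hj
      rw [Finset.mem_range] at hj
      have hl1 : lsum s 1 = s 0 := by simp [lsum]
      rw [hl1] at hj
      have hP : padList 1 s t
          = (List.replicate (s 0 - 1) (0 : A) ++ [t 0]) ++ [] := rfl
      rw [hP, List.append_nil,
        List.getD_append _ _ _ _ (by rw [List.length_replicate]; omega),
        padList_getD_zero t _ j, sub_zero, one_pow]
  | succ d ih =>
      intro s hs e
      have hs0 := hs 0 (by omega)
      have hs' : ∀ i < d + 1, 1 ≤ s (i + 1) := fun i hi => hs (i + 1) (by omega)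
      have hge : d + 1 ≤ lsum (fun i => s (i + 1)) (d + 1) := lsum_ge _ _ hs'
      have hL : lsum s (d + 1 + 1) = s 0 + lsum (fun i => s (i + 1)) (d + 1) :=
        lsum_succ' s (d + 1)
      have hP : padList (d + 1 + 1) s t
          = (List.replicate (s 0 - 1) (0 : A) ++ [t 0])
            ++ padList (d + 1) (fun i => s (i + 1)) (fun i => t (i + 1)) := rfl
      have hblock : (List.replicate (s 0 - 1) (0 : A) ++ [t 0]).length = s 0 := by
        simp; omega
      rw [show lsum s (d + 1 + 1) - 1
          = s 0 + (lsum (fun i => s (i + 1)) (d + 1) - 1) by omega]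
      rw [Finset.prod_range_add
        (fun j => (1 - (padList (d + 1 + 1) s t).getD j 0) ^ (e j)) (s 0)
        (lsum (fun i => s (i + 1)) (d + 1) - 1)]
      have h1 : ∏ j ∈ Finset.range (s 0),
          (1 - (padList (d + 1 + 1) s t).getD j 0) ^ (e j)
          = (1 - t 0) ^ (e (s 0 - 1)) := by
        rw [Finset.prod_eq_single_of_mem (s 0 - 1)
          (Finset.mem_range.mpr (by omega))]
        · rw [hP, List.getD_append _ _ _ _ (by rw [hblock]; omega),
            List.getD_append_right _ _ _ _ (by rw [List.length_replicate]),
            List.length_replicate, Nat.sub_self, List.getD_cons_zero]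
        · intro j hj hne
          rw [Finset.mem_range] at hj
          rw [hP, List.getD_append _ _ _ _ (by rw [hblock]; omega),
            List.getD_append _ _ _ _ (by rw [List.length_replicate]; omega),
            padList_getD_zero t _ j, sub_zero, one_pow]
      have h2 : ∏ i ∈ Finset.range (lsum (fun i => s (i + 1)) (d + 1) - 1),
          (1 - (padList (d + 1 + 1) s t).getD (s 0 + i) 0) ^ (e (s 0 + i))
          = ∏ r ∈ Finset.range d, (1 - t (r + 1)) ^ (e (s 0 + (lsum (fun i => s (i + 1)) (r + 1) - 1))) := by
        have hgd : ∀ i, (padList (d + 1 + 1) s t).getD (s 0 + i) 0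
            = (padList (d + 1) (fun i => s (i + 1)) (fun i => t (i + 1))).getD i 0 := by
          intro i
          rw [hP, List.getD_append_right _ _ _ _ (by rw [hblock]; omega)]
          congr 1
          rw [hblock]
          omega
        calc ∏ i ∈ Finset.range (lsum (fun i => s (i + 1)) (d + 1) - 1),
              (1 - (padList (d + 1 + 1) s t).getD (s 0 + i) 0) ^ (e (s 0 + i))
            = ∏ i ∈ Finset.range (lsum (fun i => s (i + 1)) (d + 1) - 1),
              (1 - (padList (d + 1) (fun i => s (i + 1)) (fun i => t (i + 1))).getD i 0)
                ^ ((fun i => e (s 0 + i)) i) :=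
              Finset.prod_congr rfl (fun i _ => by rw [hgd i])
          _ = _ := ih (fun i => t (i + 1)) (fun i => s (i + 1)) hs' (fun i => e (s 0 + i))
      rw [h1, h2]
      rw [Finset.prod_range_succ' (fun r => (1 - t r) ^ (e (lsum s (r + 1) - 1))) d]
      have h3 : ∀ r ∈ Finset.range d,
          (1 - t (r + 1)) ^ (e (s 0 + (lsum (fun i => s (i + 1)) (r + 1) - 1)))
            = (1 - t (r + 1)) ^ (e (lsum s (r + 1 + 1) - 1)) := by
        intro r hr
        rw [Finset.mem_range] at hr
        have hLr : lsum s (r + 1 + 1) = s 0 + lsum (fun i => s (i + 1)) (r + 1) :=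
          lsum_succ' s (r + 1)
        have hger : r + 1 ≤ lsum (fun i => s (i + 1)) (r + 1) :=
          lsum_ge _ _ (fun i hi => hs' i (by omega))
        congr 2
        omega
      rw [Finset.prod_congr rfl h3]
      have hl1 : lsum s 1 = s 0 := by simp [lsum]
      rw [hl1, mul_comm]

omit [Algebra ℚ A] in
lemma padList_one_eq_map (g : A → A) : ∀ (Q : List A),
    padList Q.length (fun _ => 1) (fun j => g (Q.getD j 0)) = Q.map g := by
  intro Q
  induction Q with
  | nil => rfl
  | cons q Q' ih =>
      have h1 : padList (q :: Q').length (fun _ => 1) (fun j => g ((q :: Q').getD j 0))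
          = (List.replicate 0 (0 : A) ++ [g ((q :: Q').getD 0 0)])
            ++ padList Q'.length (fun _ => 1) (fun i => g ((q :: Q').getD (i + 1) 0)) := rfl
      rw [h1, show (fun i => g ((q :: Q').getD (i + 1) 0)) = (fun j => g (Q'.getD j 0))
          from funext fun i => by rw [List.getD_cons_succ], ih,
        List.getD_cons_zero]
      rfl

end Pad

theorem sakugawa_seki_second {A : Type*} [CommRing A] [Algebra ℚ A]
    (d : ℕ) (hd : 1 ≤ d) (s : ℕ → ℕ) (hs : ∀ i < d, 1 ≤ s i)
    (t : ℕ → A) (n : ℕ) (hn : 1 ≤ n) :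
    ∑ m ∈ chainsIcc d 1 n,
        (∏ j ∈ Finset.range d, (idx m (j + 1) : ℚ) ^ s j)⁻¹ •
          ((∏ j ∈ Finset.range (d - 1), t j ^ (idx m (j + 1) - idx m (j + 2))) *
            t (d - 1) ^ (idx m d))
      = ∑ f ∈ chainsIcc (lsum s d) 1 n,
          (((-1 : ℚ) ^ (idx f 1) * (n.choose (idx f 1) : ℚ)) *
              (∏ j ∈ Finset.range (lsum s d), (idx f (j + 1) : ℚ))⁻¹) •
            ((∏ r ∈ Finset.range (d - 1),
                (1 - t r) ^ (idx f (lsum s (r + 1)) - idx f (lsum s (r + 1) + 1))) *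
              ((1 - t (d - 1)) ^ (idx f (lsum s d)) - 1)) := by
  obtain ⟨d', rfl⟩ : ∃ d', d = d' + 1 := ⟨d - 1, by omega⟩
  simp only [Nat.add_sub_cancel]
  have hw1 : 1 ≤ lsum s (d' + 1) := le_trans (by omega) (lsum_ge s (d' + 1) hs)
  obtain ⟨w', hw⟩ : ∃ w', lsum s (d' + 1) = w' + 1 := ⟨lsum s (d' + 1) - 1, by omega⟩
  have hPlen : (padList (d' + 1) s t).length = lsum s (d' + 1) :=
    padList_length t (d' + 1) s hs
  have hPne : padList (d' + 1) s t ≠ [] := padList_ne_nil d' s t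
  -- Step 1: LHS to nested-sum form
  have hbL := bridge (fun (u : A) k => u ^ k) d' s t (fun _ => 1) (fun _ => 1) n hs
  have e1 : ∑ f ∈ chainsIcc (d' + 1) 1 n,
      (((fun _ => (1 : ℚ)) (idx f 1))
          * (∏ j ∈ Finset.range (d' + 1), ((idx f (j + 1) : ℚ)) ^ s j)⁻¹)
        • (((fun _ => (1 : A)) (idx f 1)) *
          ((∏ j ∈ Finset.range d', t j ^ (idx f (j + 1) - idx f (j + 2))) *
            (fun (u : A) k => u ^ k) (t d') (idx f (d' + 1))))
      = ∑ m ∈ chainsIcc (d' + 1) 1 n,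
        (∏ j ∈ Finset.range (d' + 1), (idx m (j + 1) : ℚ) ^ s j)⁻¹ •
          ((∏ j ∈ Finset.range d', t j ^ (idx m (j + 1) - idx m (j + 2))) *
            t d' ^ (idx m (d' + 1))) :=
    Finset.sum_congr rfl (fun f _ => by simp only [one_mul])
  have e2 : ∑ k ∈ Finset.Icc 1 n, ((fun _ => (1 : ℚ)) k * (k : ℚ)⁻¹)
        • (((fun _ => (1 : A)) k) * Egen (fun (u : A) k => u ^ k) (padList (d' + 1) s t) k)
      = ∑ k ∈ Finset.Icc 1 n, (k : ℚ)⁻¹ • EE (padList (d' + 1) s t) k :=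
    Finset.sum_congr rfl (fun k _ => by simp only [one_mul]; rfl)
  rw [← e1, hbL, e2, star (padList (d' + 1) s t) hPne n]
  -- Step 2: RHS via bridge
  have hbR := bridge (fun (u : A) k => u ^ k - 1) w' (fun _ => 1)
    (fun j => 1 - (padList (d' + 1) s t).getD j 0)
    (fun k => (-1 : ℚ) ^ k * (n.choose k : ℚ)) (fun _ => 1) n (fun i _ => le_refl 1)
  have hmap : padList (w' + 1) (fun _ => 1)
      (fun j => 1 - (padList (d' + 1) s t).getD j 0)
      = (padList (d' + 1) s t).map (fun x => 1 - x) := by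
    have h := padList_one_eq_map (fun u => (1 : A) - u) (padList (d' + 1) s t)
    rw [show (padList (d' + 1) s t).length = w' + 1 from hPlen.trans hw] at h
    exact h
  rw [hmap] at hbR
  have e3 : ∑ k ∈ Finset.Icc 1 n,
      (((fun k => (-1 : ℚ) ^ k * (n.choose k : ℚ)) k) * (k : ℚ)⁻¹)
        • (((fun _ => (1 : A)) k)
          * Egen (fun (u : A) k => u ^ k - 1)
              ((padList (d' + 1) s t).map (fun x => 1 - x)) k)
      = ∑ m ∈ Finset.Icc 1 n, ((-1 : ℚ) ^ m * (n.choose m : ℚ) * (m : ℚ)⁻¹)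
          • EP ((padList (d' + 1) s t).map (fun x => 1 - x)) m :=
    Finset.sum_congr rfl (fun k _ => by simp only [one_mul]; rfl)
  rw [e3] at hbR
  rw [← hbR]
  -- Step 3: match the chain sums
  rw [hw]
  apply Finset.sum_congr rfl
  intro f _
  have hlast : (padList (d' + 1) s t).getD w' 0 = t d' := by
    have h := padList_getD_last t d' s hs
    rw [show lsum s (d' + 1) - 1 = w' by omega] at h
    exact h
  have hprod : ∏ j ∈ Finset.range w',
      (1 - (padList (d' + 1) s t).getD j 0) ^ (idx f (j + 1) - idx f (j + 2))
      = ∏ r ∈ Finset.range d',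
          (1 - t r) ^ (idx f (lsum s (r + 1)) - idx f (lsum s (r + 1) + 1)) := by
    have h := prod_padList t d' s hs (fun j => idx f (j + 1) - idx f (j + 2))
    rw [show lsum s (d' + 1) - 1 = w' by omega] at h
    rw [h]
    apply Finset.prod_congr rfl
    intro r hr
    rw [Finset.mem_range] at hr
    have hge : r + 1 ≤ lsum s (r + 1) :=
      lsum_ge s (r + 1) (fun i hi => hs i (by omega))
    rw [show lsum s (r + 1) - 1 + 1 = lsum s (r + 1) by omega,
      show lsum s (r + 1) - 1 + 2 = lsum s (r + 1) + 1 by omega]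
  simp only [pow_one, one_mul]
  rw [hlast, hprod]
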